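/- Let T' be a tree with bipartition (A',B'), |A'| ≤ |B'|, γ(T') = |A'|, and let b' ∈ B' be a vertex that is not γ⁻-critical, i.e., γ(T' − b') ≥ γ(T'). Let T be obtained from T' by adding two new vertices a and b with edges ab and ab'. Then γ(T) = |A'| + 1. -/

import Mathlib

open Finset

variable {V : Type} [Fintype V] [DecidableEq V]

def IsDomSet (G : SimpleGraph V) (D : Finset V) : Prop :=
  ∀ v : V, v ∉ D → ∃ u ∈ D, G.Adj u v

noncomputable def domNum (G : SimpleGraph V) : ℕ :=
  sInf {n | ∃ D : Finset V, IsDomSet G D ∧ D.card = n}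

def IsVertexCover (G : SimpleGraph V) (C : Finset V) : Prop :=
  ∀ ⦃u v : V⦄, G.Adj u v → u ∈ C ∨ v ∈ C

noncomputable def coverNum (G : SimpleGraph V) : ℕ :=
  sInf {n | ∃ C : Finset V, IsVertexCover G C ∧ C.card = n}

def IsIndepFinset (G : SimpleGraph V) (I : Finset V) : Prop :=
  ∀ u ∈ I, ∀ v ∈ I, ¬ G.Adj u v

noncomputable def indepNum (G : SimpleGraph V) : ℕ :=
  sSup {n | ∃ I : Finset V, IsIndepFinset G I ∧ I.card = n}

def IsLeaf (G : SimpleGraph V) [DecidableRel G.Adj] (v : V) : Prop :=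
  G.degree v = 1

def IsSupport (G : SimpleGraph V) [DecidableRel G.Adj] (v : V) : Prop :=
  ∃ u, G.Adj v u ∧ IsLeaf G u

def IsWeakSupport (G : SimpleGraph V) [DecidableRel G.Adj] (v : V) : Prop :=
  ((G.neighborFinset v).filter fun l => G.degree l = 1).card = 1

def IsBipartition (G : SimpleGraph V) (A B : Finset V) : Prop :=
  A ∪ B = Finset.univ ∧ Disjoint A B ∧
    ∀ ⦃u v : V⦄, G.Adj u v → (u ∈ A ∧ v ∈ B) ∨ (u ∈ B ∧ v ∈ A)

/-- The tree obtained from `T'` by adding two new vertices `a = Sum.inr true` and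
`b = Sum.inr false`, with edges `ab` and `a b'`. -/
def attachP2at (T' : SimpleGraph V) (b' : V) : SimpleGraph (V ⊕ Bool) where
  Adj x y :=
    match x, y with
    | Sum.inl u, Sum.inl v => T'.Adj u v
    | Sum.inl u, Sum.inr c => c = true ∧ u = b'
    | Sum.inr c, Sum.inl v => c = true ∧ v = b'
    | Sum.inr c, Sum.inr d => c ≠ d
  symm := by
    constructor
    intro x y h
    cases x <;> cases y <;> simp_all
    · exact h.symm
    · exact Ne.symm h
  loopless := by
    constructor
    intro x
    cases x <;> simp

theorem operation_O4 (T' : SimpleGraph V) (A' B' : Finset V) (b' : V)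
    (htree : T'.IsTree) (hbip : IsBipartition T' A' B') (hAB : A'.card ≤ B'.card)
    (hb' : b' ∈ B') (hdom : domNum T' = A'.card)
    (hnotcrit : domNum T' ≤ domNum (T'.induce ↑(Finset.univ.erase b'))) :
    domNum (attachP2at T' b') = A'.card + 1 := by
  classical
  -- a minimum dominating set of T'
  have hne : {n | ∃ D : Finset V, IsDomSet T' D ∧ D.card = n}.Nonempty :=
    ⟨_, Finset.univ, fun v hv => absurd (mem_univ v) hv, rfl⟩
  obtain ⟨D₀, hD₀dom, hD₀card⟩ := Nat.sInf_mem hne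
  have hub : domNum (attachP2at T' b') ≤ A'.card + 1 := by
    apply Nat.sInf_le
    refine ⟨insert (Sum.inr true) (D₀.image Sum.inl), ?_, ?_⟩
    · intro v hv
      match v with
      | Sum.inl w =>
        have hw : w ∉ D₀ := by
          intro h
          exact hv (mem_insert_of_mem (mem_image_of_mem _ h))
        obtain ⟨u, hu, hadj⟩ := hD₀dom w hw
        exact ⟨Sum.inl u, mem_insert_of_mem (mem_image_of_mem _ hu), hadj⟩
      | Sum.inr true => exact absurd (mem_insert_self _ _) hv
      | Sum.inr false =>
        refine ⟨Sum.inr true, mem_insert_self _ _, ?_⟩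
        show (true : Bool) ≠ false
        simp
    · rw [card_insert_of_notMem (by simp), card_image_of_injective _ Sum.inl_injective,
        hD₀card]
      show domNum T' + 1 = A'.card + 1
      rw [hdom]
  have hlb : A'.card + 1 ≤ domNum (attachP2at T' b') := by
    by_contra hlt
    push_neg at hlt
    have hne2 : {n | ∃ D : Finset (V ⊕ Bool), IsDomSet (attachP2at T' b') D ∧ D.card = n}.Nonempty :=
      ⟨_, Finset.univ, fun v hv => absurd (mem_univ v) hv, rfl⟩
    obtain ⟨D, hDdom, hDcard⟩ := Nat.sInf_mem hne2
    have hDcard2 : D.card = domNum (attachP2at T' b') := hDcard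
    have hDle : D.card ≤ A'.card := by omega
    -- one of the two new vertices is in D
    have hinr : Sum.inr true ∈ D ∨ Sum.inr false ∈ D := by
      by_cases h : Sum.inr false ∈ D
      · exact Or.inr h
      · obtain ⟨u, hu, hadj⟩ := hDdom (Sum.inr false) h
        match u with
        | Sum.inl w =>
          have : (false : Bool) = true ∧ w = b' := hadj
          simp at this
        | Sum.inr true => exact Or.inl hu
        | Sum.inr false =>
          have : (false : Bool) ≠ false := hadj
          simp at this
    set Din : Finset V := Finset.univ.filter (fun w => Sum.inl w ∈ D) with hDin
    have hmemDin : ∀ w : V, w ∈ Din ↔ Sum.inl w ∈ D := by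
      intro w; simp [hDin]
    have hcard : Din.card + 1 ≤ D.card := by
      rcases hinr with h | h
      · have hsub : insert (Sum.inr true) (Din.image Sum.inl) ⊆ D := by
          intro x hx
          rcases mem_insert.mp hx with rfl | hx
          · exact h
          · obtain ⟨w, hw, rfl⟩ := mem_image.mp hx
            exact (hmemDin w).1 hw
        calc Din.card + 1 = (insert (Sum.inr true) (Din.image Sum.inl)).card := by
              rw [card_insert_of_notMem (by simp),
                card_image_of_injective _ Sum.inl_injective]
          _ ≤ D.card := card_le_card hsub
      · have hsub : insert (Sum.inr false) (Din.image Sum.inl) ⊆ D := by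
          intro x hx
          rcases mem_insert.mp hx with rfl | hx
          · exact h
          · obtain ⟨w, hw, rfl⟩ := mem_image.mp hx
            exact (hmemDin w).1 hw
        calc Din.card + 1 = (insert (Sum.inr false) (Din.image Sum.inl)).card := by
              rw [card_insert_of_notMem (by simp),
                card_image_of_injective _ Sum.inl_injective]
          _ ≤ D.card := card_le_card hsub
    by_cases hb'D : Sum.inl b' ∈ D
    · -- Din dominates T'
      have hdomin : IsDomSet T' Din := by
        intro v hv
        have hvD : Sum.inl v ∉ D := fun h => hv ((hmemDin v).2 h)
        obtain ⟨u, hu, hadj⟩ := hDdom (Sum.inl v) hvD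
        match u with
        | Sum.inl w => exact ⟨w, (hmemDin w).2 hu, hadj⟩
        | Sum.inr true =>
          have hvb : v = b' := (hadj : (true : Bool) = true ∧ v = b').2
          exact absurd (hvb ▸ hb'D) hvD
        | Sum.inr false =>
          have : (false : Bool) = true ∧ v = b' := hadj
          simp at this
      have : domNum T' ≤ Din.card := Nat.sInf_le ⟨Din, hdomin, rfl⟩
      omega
    · -- Din dominates T' − b'
      have hne_b' : ∀ w ∈ Din, w ≠ b' := by
        intro w hw hwb
        exact hb'D (hwb ▸ (hmemDin w).1 hw)
      set p : V → Prop := fun w => w ∈ (↑(Finset.univ.erase b') : Set V) with hp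
      have hpmem : ∀ w : V, p w ↔ w ≠ b' := by
        intro w; simp [hp]
      set D' : Finset ↥(↑(Finset.univ.erase b') : Set V) := Din.subtype p with hD'
      have hD'card : D'.card = Din.card := by
        rw [hD', Finset.card_subtype, Finset.filter_true_of_mem]
        intro w hw
        exact (hpmem w).2 (hne_b' w hw)
      have hdomin : IsDomSet (T'.induce ↑(Finset.univ.erase b')) D' := by
        rintro ⟨v, hv⟩ hvD'
        have hvb : v ≠ b' := (hpmem v).1 hv
        have hvDin : v ∉ Din := by
          intro h
          exact hvD' (Finset.mem_subtype.2 h)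
        have hvD : Sum.inl v ∉ D := fun h => hvDin ((hmemDin v).2 h)
        obtain ⟨u, hu, hadj⟩ := hDdom (Sum.inl v) hvD
        match u with
        | Sum.inl w =>
          have hwDin : w ∈ Din := (hmemDin w).2 hu
          refine ⟨⟨w, (hpmem w).2 (hne_b' w hwDin)⟩, Finset.mem_subtype.2 hwDin, ?_⟩
          exact hadj
        | Sum.inr true =>
          have hvb' : v = b' := (hadj : (true : Bool) = true ∧ v = b').2
          exact absurd hvb' hvb
        | Sum.inr false =>
          have : (false : Bool) = true ∧ v = b' := hadj
          simp at this
      have : domNum (T'.induce ↑(Finset.univ.erase b')) ≤ Din.card := by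
        exact Nat.sInf_le (show Din.card ∈ {n | ∃ D : Finset ↥(↑(Finset.univ.erase b') : Set V),
            IsDomSet (T'.induce ↑(Finset.univ.erase b')) D ∧ D.card = n} from ⟨D', hdomin, hD'card⟩)
      omega
  omega
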